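/- arXiv:1802.00993 — 8 statements merged into one kernel-verified Lean document; each statement's English description precedes it below -/
import Mathlib

section
/- For all real a, b, c > 0 with ac ≤ 2, the sequence s_n = (Γ(an+b)/Γ(b))^c satisfies Carleman's condition: the series ∑_{n≥1} s_n^{−1/(2n)} diverges. -/
open Real Filter

lemma gamma_le_rpow_self {x : ℝ} (hx : 1 ≤ x) : Real.Gamma x ≤ x ^ x := by
  obtain ⟨k, hk⟩ : ∃ k : ℕ, ⌈x⌉ = (k : ℤ) + 1 := by
    refine ⟨(⌈x⌉ - 1).toNat, ?_⟩
    have h1 : (1:ℤ) ≤ ⌈x⌉ := by exact_mod_cast Int.one_le_ceil_iff.mpr (by linarith)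
    omega
  have hxk : x ≤ (k:ℝ) + 1 := by
    have := Int.le_ceil x
    rw [hk] at this; push_cast at this; linarith
  have hkx : (k:ℝ) ≤ x := by
    have := Int.ceil_lt_add_one x
    rw [hk] at this; push_cast at this; linarith
  -- Γ x ≤ max (Γ 1) (Γ (k+1)) by convexity
  have hconv := Real.convexOn_Gamma
  have hmem : x ∈ segment ℝ (1:ℝ) ((k:ℝ)+1) := by
    rw [segment_eq_Icc (by linarith)]
    exact ⟨hx, hxk⟩
  have h1 : Real.Gamma x ≤ max (Real.Gamma 1) (Real.Gamma ((k:ℝ)+1)) :=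
    hconv.le_on_segment (by norm_num) (Set.mem_Ioi.mpr (by positivity)) hmem
  have hfact : Real.Gamma ((k:ℝ)+1) = (Nat.factorial k : ℝ) := Real.Gamma_nat_eq_factorial k
  have hbound : (Nat.factorial k : ℝ) ≤ x ^ x := by
    calc (Nat.factorial k : ℝ) ≤ ((k:ℝ)) ^ (k:ℕ) := by exact_mod_cast Nat.factorial_le_pow k
      _ ≤ x ^ (k:ℕ) := pow_le_pow_left₀ (Nat.cast_nonneg k) hkx k
      _ = x ^ ((k:ℕ):ℝ) := (Real.rpow_natCast x k).symm
      _ ≤ x ^ x := Real.rpow_le_rpow_of_exponent_le hx hkx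
  have hone : (1:ℝ) ≤ x ^ x := Real.one_le_rpow hx (by linarith)
  rw [Real.Gamma_one, hfact] at h1
  exact h1.trans (max_le hone hbound)

theorem stmt_4 (a b c : ℝ) (ha : 0 < a) (hb : 0 < b) (hc : 0 < c) (hac : a * c ≤ 2) :
    ¬ Summable (fun n : ℕ =>
      ((Real.Gamma (a * (n + 1) + b) / Real.Gamma b) ^ c) ^ (-(1 / (2 * ((n:ℝ) + 1))))) := by
  intro hsum
  set t : ℕ → ℝ := fun n =>
      ((Real.Gamma (a * (n + 1) + b) / Real.Gamma b) ^ c) ^ (-(1 / (2 * ((n:ℝ) + 1)))) with ht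
  set D : ℝ := (a*c/2)*Real.log (a+b) + c*b*(a+b)/2 + (c/2)*|Real.log (Real.Gamma b)| with hD
  obtain ⟨N, hN⟩ := exists_nat_ge (1/a)
  have hGb : 0 < Real.Gamma b := Real.Gamma_pos_of_pos hb
  have key : ∀ n : ℕ, N ≤ n → ‖1/((n:ℝ)+1)‖ ≤ Real.exp D * ‖t n‖ := by
    intro n hn
    set m : ℝ := (n:ℝ)+1 with hmdef
    have hm1 : (1:ℝ) ≤ m := by
      have := Nat.cast_nonneg (α:=ℝ) n
      simp only [hmdef]; linarith
    have hm0 : (0:ℝ) < m := by linarith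
    have hNm : (N:ℝ) ≤ m := by
      have : (N:ℝ) ≤ (n:ℝ) := by exact_mod_cast hn
      linarith
    set x : ℝ := a*m+b with hxdef
    have hx1 : (1:ℝ) ≤ x := by
      have h1 : a * (1/a) ≤ a * m := by
        apply mul_le_mul_of_nonneg_left _ ha.le
        calc 1/a ≤ (N:ℝ) := hN
          _ ≤ m := hNm
      rw [mul_one_div_cancel ha.ne'] at h1
      have : (0:ℝ) < b := hb
      simp only [hxdef]; linarith
    have hx0 : (0:ℝ) < x := by linarith
    have hGx : 0 < Real.Gamma x := Real.Gamma_pos_of_pos hx0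
    have hG : 0 < Real.Gamma x / Real.Gamma b := div_pos hGx hGb
    have htn : t n = Real.exp ((-(c/(2*m))) * Real.log (Real.Gamma x / Real.Gamma b)) := by
      have : t n = (Real.Gamma x / Real.Gamma b) ^ (c * -(1/(2*m))) := by
        rw [ht]
        simp only [hxdef, hmdef]
        rw [Real.rpow_mul hG.le]
      rw [this, Real.rpow_def_of_pos hG]
      ring_nf
    have hlogG : Real.log (Real.Gamma x / Real.Gamma b)
        = Real.log (Real.Gamma x) - Real.log (Real.Gamma b) :=
      Real.log_div hGx.ne' hGb.ne'
    -- main estimate : (c/(2m)) * log G ≤ D + log m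
    have hlogGam : Real.log (Real.Gamma x) ≤ x * Real.log x := by
      calc Real.log (Real.Gamma x) ≤ Real.log (x ^ x) :=
            Real.log_le_log hGx (gamma_le_rpow_self hx1)
        _ = x * Real.log x := Real.log_rpow hx0 x
    have hlogm : 0 ≤ Real.log m := Real.log_nonneg hm1
    have hxle : x ≤ (a+b)*m := by
      have : b ≤ b*m := le_mul_of_one_le_right hb.le hm1
      simp only [hxdef]; nlinarith
    have hlogx_le : Real.log x ≤ Real.log (a+b) + Real.log m := by
      calc Real.log x ≤ Real.log ((a+b)*m) := Real.log_le_log hx0 hxle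
        _ = Real.log (a+b) + Real.log m := Real.log_mul (by positivity) hm0.ne'
    have hlogx_le_x : Real.log x ≤ x := by
      have := Real.log_le_sub_one_of_pos hx0; linarith
    have hlogx0 : 0 ≤ Real.log x := Real.log_nonneg hx1
    have hmain : (c/(2*m)) * Real.log (Real.Gamma x / Real.Gamma b) ≤ D + Real.log m := by
      rw [hlogG]
      have hcm0 : 0 ≤ c/(2*m) := by positivity
      have h1 : (c/(2*m)) * Real.log (Real.Gamma x) ≤ (c/(2*m)) * (x * Real.log x) :=
        mul_le_mul_of_nonneg_left hlogGam hcm0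
      have hsplit : (c/(2*m)) * (x * Real.log x)
          = (a*c/2)*Real.log x + (c*b/(2*m))*Real.log x := by
        simp only [hxdef]
        field_simp
      have h2 : (a*c/2)*Real.log x ≤ (a*c/2)*(Real.log (a+b) + Real.log m) :=
        mul_le_mul_of_nonneg_left hlogx_le (by positivity)
      have h3 : (a*c/2)*Real.log m ≤ 1 * Real.log m := by
        apply mul_le_mul_of_nonneg_right _ hlogm
        linarith
      have h4 : (c*b/(2*m))*Real.log x ≤ (c*b/(2*m))*((a+b)*m) := by
        apply mul_le_mul_of_nonneg_left _ (by positivity)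
        linarith
      have h5 : (c*b/(2*m))*((a+b)*m) = c*b*(a+b)/2 := by field_simp
      have h6 : (c/(2*m)) * (-Real.log (Real.Gamma b)) ≤ (c/2)*|Real.log (Real.Gamma b)| := by
        calc (c/(2*m)) * (-Real.log (Real.Gamma b))
            ≤ (c/(2*m)) * |Real.log (Real.Gamma b)| :=
              mul_le_mul_of_nonneg_left (neg_le_abs _) hcm0
          _ ≤ (c/2)*|Real.log (Real.Gamma b)| := by
              apply mul_le_mul_of_nonneg_right _ (abs_nonneg _)
              apply div_le_div_of_nonneg_left hc.le (by norm_num) (by linarith)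
      have heq : (c/(2*m)) * (Real.log (Real.Gamma x) - Real.log (Real.Gamma b))
          = (c/(2*m)) * Real.log (Real.Gamma x) + (c/(2*m)) * (-Real.log (Real.Gamma b)) := by
        ring
      rw [hD, heq]
      linarith [h1, hsplit, h2, h3, h4, h5, h6]
    have htpos : 0 < t n := by rw [htn]; exact Real.exp_pos _
    rw [Real.norm_eq_abs, Real.norm_eq_abs, abs_of_pos (by positivity : (0:ℝ) < 1/((n:ℝ)+1)),
      abs_of_pos htpos, htn, ← hmdef]
    have h1m : 1/m = Real.exp (-Real.log m) := by
      rw [Real.exp_neg, Real.exp_log hm0, one_div]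
    rw [h1m, ← Real.exp_add]
    apply Real.exp_le_exp.mpr
    linarith [hmain, (by ring : -(c/(2*m)) * Real.log (Real.Gamma x / Real.Gamma b) = -((c/(2*m)) * Real.log (Real.Gamma x / Real.Gamma b)))]
  have hbig : (fun n : ℕ => 1/((n:ℝ)+1)) =O[atTop] t := by
    rw [Asymptotics.isBigO_iff]
    exact ⟨Real.exp D, eventually_atTop.mpr ⟨N, key⟩⟩
  have hsum2 : Summable (fun n : ℕ => 1/((n:ℝ)+1)) := summable_of_isBigO_nat hsum hbig
  have hsum3 : Summable (fun n : ℕ => 1/(((n+1):ℕ):ℝ)) := by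
    apply hsum2.congr; intro n; push_cast; ring
  exact Real.not_summable_one_div_natCast ((summable_nat_add_iff 1).mp hsum3)
end

section
/- For all real a, b, c > 0 with ac > 2, the series ∑_{n≥1} (Γ(an+b)/Γ(b))^{−c/(2n)} converges. -/
open Real Filter Topology


-- n^n ≤ n! e^n
lemma factGe (n : ℕ) : (n:ℝ) ^ (n:ℝ) * Real.exp (-(n:ℝ)) ≤ (n.factorial : ℝ) := by
  have h1 : (n:ℝ) ^ n / (n.factorial : ℝ) ≤ Real.exp n := by
    refine le_trans ?_ (Real.sum_le_exp_of_nonneg (Nat.cast_nonneg n) (n+1))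
    exact Finset.single_le_sum (f := fun i => (n:ℝ)^i / (i.factorial : ℝ))
      (fun i _ => by positivity) (Finset.self_mem_range_succ n)
  have hf : (0:ℝ) < (n.factorial : ℝ) := by exact_mod_cast n.factorial_pos
  rw [div_le_iff₀ hf] at h1
  rw [Real.rpow_natCast, Real.exp_neg]
  rw [mul_inv_le_iff₀ (Real.exp_pos _)]
  linarith [h1]

lemma gammaGe {x : ℝ} (hx : 3 ≤ x) :
    (x - 2) ^ (x - 2) * Real.exp (-x) ≤ Real.Gamma x := by
  set m := ⌊x⌋₊ with hm
  have hm3 : 3 ≤ m := Nat.le_floor (by exact_mod_cast hx)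
  have hmx : (m:ℝ) ≤ x := Nat.floor_le (by linarith)
  have hxm : x < m + 1 := Nat.lt_floor_add_one x
  have hm1 : ((m - 1 : ℕ) : ℝ) = (m:ℝ) - 1 := by
    have : 1 ≤ m := by omega
    push_cast [Nat.cast_sub this]; ring
  have hGm : Real.Gamma (m:ℝ) = ((m-1).factorial : ℝ) := by
    have := Real.Gamma_nat_eq_factorial (m - 1)
    rwa [hm1, sub_add_cancel] at this
  have hmono : Real.Gamma (m:ℝ) ≤ Real.Gamma x := by
    rcases eq_or_lt_of_le hmx with h | h
    · rw [h]
    · exact le_of_lt (Real.Gamma_strictMonoOn_Ici (by simp; exact_mod_cast by omega)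
        (by simp; linarith) h)
  have hfac := factGe (m - 1)
  rw [hm1] at hfac
  refine le_trans ?_ (le_trans (hfac.trans hGm.ge) hmono)
  have hm3' : (3:ℝ) ≤ (m:ℝ) := by exact_mod_cast hm3
  have h1 : (1:ℝ) ≤ (m:ℝ) - 1 := by linarith
  have h2 : x - 2 ≤ (m:ℝ) - 1 := by linarith
  have h0 : (0:ℝ) ≤ x - 2 := by linarith
  have hb : (x - 2) ^ (x - 2) ≤ ((m:ℝ) - 1) ^ ((m:ℝ) - 1) :=
    le_trans (Real.rpow_le_rpow h0 h2 h0) (Real.rpow_le_rpow_of_exponent_le h1 h2)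
  have he : Real.exp (-x) ≤ Real.exp (-((m:ℝ) - 1)) := by
    apply Real.exp_le_exp.mpr; linarith
  exact mul_le_mul hb he (le_of_lt (Real.exp_pos _)) (by positivity)


lemma tendS (a b c : ℝ) (ha : 0 < a) :
    Tendsto (fun n : ℕ =>
      c * ((a*((n:ℝ)+1)+b - 2) * Real.log (a*((n:ℝ)+1)+b - 2) - (a*((n:ℝ)+1)+b)
        - Real.log (Real.Gamma b)) / (((n:ℝ)+1) * Real.log ((n:ℝ)+1)))
      atTop (𝓝 (a*c)) := by
  have hn1 : Tendsto (fun n : ℕ => (n:ℝ)+1) atTop atTop :=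
    tendsto_atTop_add_const_right _ 1 tendsto_natCast_atTop_atTop
  have hlog : Tendsto (fun n : ℕ => Real.log ((n:ℝ)+1)) atTop atTop :=
    Real.tendsto_log_atTop.comp hn1
  set u : ℕ → ℝ := fun n => a + (b-2)/((n:ℝ)+1) with hu_def
  have hu : Tendsto u atTop (𝓝 a) := by
    have : Tendsto (fun n : ℕ => (b-2)/((n:ℝ)+1)) atTop (𝓝 0) :=
      tendsto_const_nhds.div_atTop hn1
    simpa using tendsto_const_nhds.add this
  have hlu : Tendsto (fun n => Real.log (u n)) atTop (𝓝 (Real.log a)) :=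
    hu.log (ne_of_gt ha)
  set v : ℕ → ℝ := fun n => 1 + Real.log (u n) / Real.log ((n:ℝ)+1) with hv_def
  have hv : Tendsto v atTop (𝓝 1) := by
    have : Tendsto (fun n => Real.log (u n) / Real.log ((n:ℝ)+1)) atTop (𝓝 0) :=
      hlu.div_atTop hlog
    simpa using tendsto_const_nhds.add this
  set w : ℕ → ℝ := fun n => (a + b/((n:ℝ)+1)) / Real.log ((n:ℝ)+1) with hw_def
  have hw : Tendsto w atTop (𝓝 0) := by
    have h1 : Tendsto (fun n : ℕ => a + b/((n:ℝ)+1)) atTop (𝓝 (a+0)) :=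
      tendsto_const_nhds.add (tendsto_const_nhds.div_atTop hn1)
    exact h1.div_atTop hlog
  set z : ℕ → ℝ := fun n => c * Real.log (Real.Gamma b) / (((n:ℝ)+1) * Real.log ((n:ℝ)+1))
    with hz_def
  have hz : Tendsto z atTop (𝓝 0) :=
    tendsto_const_nhds.div_atTop (hn1.atTop_mul_atTop₀ hlog)
  have hmain : Tendsto (fun n => c * (u n * v n - w n) - z n) atTop
      (𝓝 (c * (a * 1 - 0) - 0)) :=
    (((hu.mul hv).sub hw).const_mul c).sub hz
  have hval : c * (a * 1 - 0) - 0 = a * c := by ring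
  rw [hval] at hmain
  refine hmain.congr' ?_
  have hupos : ∀ᶠ n : ℕ in atTop, 0 < u n := hu.eventually (lt_mem_nhds ha)
  filter_upwards [hupos, eventually_ge_atTop 1] with n hun hn1'
  have hnpos : (0:ℝ) < (n:ℝ)+1 := by positivity
  have hlogpos : 0 < Real.log ((n:ℝ)+1) := by
    apply Real.log_pos
    have : (1:ℝ) ≤ (n:ℝ) := by exact_mod_cast hn1'
    linarith
  have hX2 : a*((n:ℝ)+1)+b - 2 = ((n:ℝ)+1) * u n := by
    rw [hu_def]; field_simp; ring
  have hlogX : Real.log (a*((n:ℝ)+1)+b - 2)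
      = Real.log ((n:ℝ)+1) + Real.log (u n) := by
    rw [hX2, Real.log_mul (ne_of_gt hnpos) (ne_of_gt hun)]
  have hX : a*((n:ℝ)+1)+b = ((n:ℝ)+1) * (a + b/((n:ℝ)+1)) := by field_simp
  rw [hv_def, hw_def, hz_def]
  simp only
  rw [hlogX, hX2, hX]
  field_simp

theorem stmt_6 (a b c : ℝ) (ha : 0 < a) (hb : 0 < b) (hc : 0 < c) (hac : 2 < a * c) :
    Summable (fun n : ℕ =>
      (Real.Gamma (a * (n + 1) + b) / Real.Gamma b) ^ (-(c / (2 * ((n:ℝ) + 1))))) := by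
  set q : ℝ := (2 + a*c)/4 with hq_def
  have hq1 : 1 < q := by rw [hq_def]; linarith
  have hq2 : 2*q < a*c := by rw [hq_def]; linarith
  have hgsum : Summable (fun n : ℕ => ((n:ℝ)+1) ^ (-q)) := by
    have h0 : Summable (fun n : ℕ => ((n:ℝ)) ^ (-q)) :=
      Real.summable_nat_rpow.mpr (by linarith)
    have h2 := (summable_nat_add_iff 1).mpr h0
    refine h2.congr fun n => ?_
    push_cast
    ring_nf
  have hΓb : 0 < Real.Gamma b := Real.Gamma_pos_of_pos hb
  have hn1T : Tendsto (fun n : ℕ => (n:ℝ)+1) atTop atTop :=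
    tendsto_atTop_add_const_right _ 1 tendsto_natCast_atTop_atTop
  have hXtend : Tendsto (fun n : ℕ => a*((n:ℝ)+1)+b) atTop atTop :=
    tendsto_atTop_add_const_right _ b (hn1T.const_mul_atTop ha)
  have hX3 : ∀ᶠ n : ℕ in atTop, 3 ≤ a*((n:ℝ)+1)+b := hXtend.eventually_ge_atTop 3
  have hSev : ∀ᶠ n : ℕ in atTop,
      2*q < c * ((a*((n:ℝ)+1)+b - 2) * Real.log (a*((n:ℝ)+1)+b - 2) - (a*((n:ℝ)+1)+b)
        - Real.log (Real.Gamma b)) / (((n:ℝ)+1) * Real.log ((n:ℝ)+1)) :=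
    (tendS a b c ha).eventually (lt_mem_nhds hq2)
  have hbound : ∀ᶠ n : ℕ in atTop,
      (Real.Gamma (a * (n + 1) + b) / Real.Gamma b) ^ (-(c / (2 * ((n:ℝ) + 1))))
        ≤ ((n:ℝ)+1) ^ (-q) := by
    filter_upwards [hX3, hSev, eventually_ge_atTop 1] with n h3 hSn hn1
    set N : ℝ := (n:ℝ)+1 with hN_def
    set X : ℝ := a*N+b with hX_def
    have hNpos : (0:ℝ) < N := by positivity
    have hlogN : 0 < Real.log N := by
      apply Real.log_pos
      have : (1:ℝ) ≤ (n:ℝ) := by exact_mod_cast hn1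
      rw [hN_def]; linarith
    have hXpos : 0 < X := by linarith
    have hΓX : 0 < Real.Gamma X := Real.Gamma_pos_of_pos hXpos
    have hR : 0 < Real.Gamma X / Real.Gamma b := div_pos hΓX hΓb
    have hD : 0 < N * Real.log N := by positivity
    have hS' : 2*q * (N * Real.log N)
        < c * ((X - 2) * Real.log (X - 2) - X - Real.log (Real.Gamma b)) :=
      (lt_div_iff₀ hD).mp hSn
    have hX2pos : (0:ℝ) < X - 2 := by linarith
    have hloggamma : (X - 2) * Real.log (X - 2) - X ≤ Real.log (Real.Gamma X) := by
      have hg := gammaGe h3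
      have hlpos : (0:ℝ) < (X-2) ^ (X-2) * Real.exp (-X) := by positivity
      have := Real.log_le_log hlpos hg
      rwa [Real.log_mul (by positivity) (Real.exp_ne_zero _), Real.log_rpow hX2pos,
        Real.log_exp] at this
    have hlogR : Real.log (Real.Gamma X / Real.Gamma b)
        = Real.log (Real.Gamma X) - Real.log (Real.Gamma b) :=
      Real.log_div (ne_of_gt hΓX) (ne_of_gt hΓb)
    have hchain : 2*q * (N * Real.log N) ≤ c * Real.log (Real.Gamma X / Real.Gamma b) := by
      rw [hlogR]
      nlinarith [hloggamma, hc.le]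
    show (Real.Gamma X / Real.Gamma b) ^ (-(c / (2 * N))) ≤ N ^ (-q)
    rw [Real.rpow_def_of_pos hR, Real.rpow_def_of_pos hNpos]
    apply Real.exp_le_exp.mpr
    have key : q * Real.log N ≤ c * Real.log (Real.Gamma X / Real.Gamma b) / (2*N) := by
      rw [le_div_iff₀ (by positivity)]
      nlinarith [hchain]
    have heq : Real.log (Real.Gamma X / Real.Gamma b) * -(c / (2 * N))
        = -(c * Real.log (Real.Gamma X / Real.Gamma b) / (2*N)) := by ring
    have heq2 : Real.log N * -q = -(q * Real.log N) := by ring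
    rw [heq, heq2]
    linarith [key]
  have hfpos : ∀ n : ℕ, 0 ≤ (Real.Gamma (a * (n + 1) + b) / Real.Gamma b)
      ^ (-(c / (2 * ((n:ℝ) + 1)))) := by
    intro n
    have hXpos : 0 < a * ((n:ℝ) + 1) + b := by positivity
    have := Real.Gamma_pos_of_pos hXpos
    positivity
  refine summable_of_isBigO_nat hgsum (Asymptotics.IsBigO.of_bound 1 ?_)
  filter_upwards [hbound] with n hn
  rw [one_mul, Real.norm_eq_abs, Real.norm_eq_abs, abs_of_nonneg (hfpos n),
    abs_of_nonneg (by positivity)]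
  exact hn
end

section
/- For every complex z with Re z > 0, the Binet remainder μ(z) := log Γ(z) − (z − 1/2) Log z + z − (1/2) log(2π) satisfies |μ(z)| ≤ μ(Re z) ≤ 1/(12 Re z). -/
open MeasureTheory Set

/-- The Binet remainder, via its integral representation (complex argument). -/
noncomputable def binetMu (z : ℂ) : ℂ :=
  ∫ t in Ioi (0:ℝ), ((1/2 - 1/t + 1/(Real.exp t - 1) : ℝ) : ℂ) * Complex.exp (-z * t) / (t:ℂ)

/-- The Binet remainder for a real argument. -/
noncomputable def binetMuReal (x : ℝ) : ℝ :=
  ∫ t in Ioi (0:ℝ), (1/2 - 1/t + 1/(Real.exp t - 1)) * Real.exp (-x * t) / t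

lemma aux_nonneg_of_hasDerivAt {f f' : ℝ → ℝ} (hf : ∀ x, HasDerivAt f (f' x) x)
    (h0 : f 0 = 0) (hd : ∀ x, 0 ≤ x → 0 ≤ f' x) : ∀ x, 0 ≤ x → 0 ≤ f x := by
  intro x hx
  have hmono : MonotoneOn f (Ici 0) := by
    apply monotoneOn_of_deriv_nonneg (convex_Ici 0)
      (fun t _ => (hf t).continuousAt.continuousWithinAt)
      (fun t _ => (hf t).differentiableAt.differentiableWithinAt)
    intro t ht
    rw [interior_Ici] at ht
    rw [(hf t).deriv]
    exact hd t ht.le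
  simpa [h0] using hmono self_mem_Ici (mem_Ici.mpr hx) hx

lemma aux_F_nonneg {t : ℝ} (ht : 0 ≤ t) : 0 ≤ (Real.exp t - 1) * (t - 2) + 2 * t := by
  refine aux_nonneg_of_hasDerivAt
    (f := fun t : ℝ => (Real.exp t - 1) * (t - 2) + 2 * t)
    (f' := fun t : ℝ => Real.exp t * (t - 1) + 1) ?_ (by norm_num) ?_ t ht
  · intro x
    have h1 := (((Real.hasDerivAt_exp x).sub_const 1).mul
      ((hasDerivAt_id x).sub_const 2)).add ((hasDerivAt_id x).const_mul 2)
    exact h1.congr_deriv (by simp only [id_eq]; ring)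
  · intro x _
    show (0:ℝ) ≤ Real.exp x * (x - 1) + 1
    have h2 : Real.exp x * Real.exp (-x) = 1 := by rw [← Real.exp_add]; simp
    have h3 : (-x + 1) ≤ Real.exp (-x) := Real.add_one_le_exp (-x)
    have h4 := mul_le_mul_of_nonneg_left h3 (Real.exp_pos x).le
    nlinarith [h4, h2]

lemma aux_h_nonneg {t : ℝ} (ht : 0 ≤ t) :
    0 ≤ (Real.exp t - 1) * (t^2/12 - t/2 + 1) - t := by
  have step2 : ∀ x : ℝ, 0 ≤ x → 0 ≤ Real.exp x * (x^2/12 - x/6 + 1/6) - 1/6 := by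
    refine aux_nonneg_of_hasDerivAt
      (f := fun t : ℝ => Real.exp t * (t^2/12 - t/6 + 1/6) - 1/6)
      (f' := fun t : ℝ => Real.exp t * (t^2/12)) ?_ (by norm_num) ?_
    · intro y
      have hp : HasDerivAt (fun t : ℝ => t^2/12 - t/6 + 1/6) ((2*y)/12 - 1/6) y := by
        have := ((((hasDerivAt_pow 2 y).div_const 12).sub
          ((hasDerivAt_id y).div_const 6)).add_const (1/6 : ℝ))
        exact this.congr_deriv (by ring)
      exact (((Real.hasDerivAt_exp y).mul hp).sub_const (1/6)).congr_deriv (by ring)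
    · intro y _; positivity
  have step1 : ∀ x : ℝ, 0 ≤ x → 0 ≤ Real.exp x * (x^2/12 - x/3 + 1/2) - x/6 - 1/2 := by
    refine aux_nonneg_of_hasDerivAt
      (f := fun t : ℝ => Real.exp t * (t^2/12 - t/3 + 1/2) - t/6 - 1/2)
      (f' := fun t : ℝ => Real.exp t * (t^2/12 - t/6 + 1/6) - 1/6) ?_ (by norm_num) step2
    intro y
    have hp : HasDerivAt (fun t : ℝ => t^2/12 - t/3 + 1/2) ((2*y)/12 - 1/3) y := by
      have := ((((hasDerivAt_pow 2 y).div_const 12).sub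
        ((hasDerivAt_id y).div_const 3)).add_const (1/2 : ℝ))
      exact this.congr_deriv (by ring)
    exact ((((Real.hasDerivAt_exp y).mul hp).sub
      ((hasDerivAt_id y).div_const 6)).sub_const (1/2)).congr_deriv (by ring)
  refine aux_nonneg_of_hasDerivAt
    (f := fun t : ℝ => (Real.exp t - 1) * (t^2/12 - t/2 + 1) - t)
    (f' := fun t : ℝ => Real.exp t * (t^2/12 - t/3 + 1/2) - t/6 - 1/2) ?_ (by norm_num) step1 t ht
  intro y
  have hp : HasDerivAt (fun t : ℝ => t^2/12 - t/2 + 1) ((2*y)/12 - 1/2) y := by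
    have := ((((hasDerivAt_pow 2 y).div_const 12).sub
      ((hasDerivAt_id y).div_const 2)).add_const (1 : ℝ))
    exact this.congr_deriv (by ring)
  exact ((((Real.hasDerivAt_exp y).sub_const 1).mul hp).sub
    (hasDerivAt_id y)).congr_deriv (by ring)

lemma exp_sub_one_pos {t : ℝ} (ht : 0 < t) : 0 < Real.exp t - 1 := by
  have : (1:ℝ) < Real.exp t := by
    calc (1:ℝ) = Real.exp 0 := by simp
    _ < Real.exp t := Real.exp_lt_exp.mpr ht
  linarith

lemma g_nonneg {t : ℝ} (ht : 0 < t) : 0 ≤ 1/2 - 1/t + 1/(Real.exp t - 1) := by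
  have het := exp_sub_one_pos ht
  have hF := aux_F_nonneg ht.le
  have key : 1/2 - 1/t + 1/(Real.exp t - 1)
      = ((Real.exp t - 1) * (t - 2) + 2 * t) / (2 * t * (Real.exp t - 1)) := by
    field_simp
  rw [key]
  positivity

lemma g_le {t : ℝ} (ht : 0 < t) : 1/2 - 1/t + 1/(Real.exp t - 1) ≤ t/12 := by
  have het := exp_sub_one_pos ht
  have hh := aux_h_nonneg ht.le
  have key : t/12 - (1/2 - 1/t + 1/(Real.exp t - 1))
      = ((Real.exp t - 1) * (t^2/12 - t/2 + 1) - t) / (t * (Real.exp t - 1)) := by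
    field_simp; ring
  have : 0 ≤ t/12 - (1/2 - 1/t + 1/(Real.exp t - 1)) := by
    rw [key]; positivity
  linarith

theorem stmt_10 (z : ℂ) (hz : 0 < z.re) :
    ‖binetMu z‖ ≤ binetMuReal z.re ∧ binetMuReal z.re ≤ 1 / (12 * z.re) := by
  set x := z.re with hxdef
  have hnorm : ∀ t ∈ Ioi (0:ℝ),
      ‖((1/2 - 1/t + 1/(Real.exp t - 1) : ℝ) : ℂ) * Complex.exp (-z * t) / (t:ℂ)‖
        = (1/2 - 1/t + 1/(Real.exp t - 1)) * Real.exp (-x * t) / t := by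
    intro t ht
    rw [mem_Ioi] at ht
    rw [norm_div, norm_mul, Complex.norm_real, 
      Complex.norm_exp, Complex.norm_real, Real.norm_eq_abs, Real.norm_eq_abs,
      abs_of_nonneg (g_nonneg ht), abs_of_pos ht]
    congr 2
    simp [Complex.mul_re, hxdef]
  constructor
  · calc ‖binetMu z‖
        ≤ ∫ t in Ioi (0:ℝ), ‖((1/2 - 1/t + 1/(Real.exp t - 1) : ℝ) : ℂ)
            * Complex.exp (-z * t) / (t:ℂ)‖ := by
          rw [binetMu]
          exact norm_integral_le_integral_norm _
      _ = binetMuReal x := setIntegral_congr_fun measurableSet_Ioi hnorm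
  · have hintexp : IntegrableOn (fun t : ℝ => Real.exp (-x * t)) (Ioi 0) :=
      exp_neg_integrableOn_Ioi 0 hz
    have hint2 : IntegrableOn (fun t : ℝ => (1/12) * Real.exp (-x * t)) (Ioi 0) :=
      hintexp.const_mul _
    have hmeas : AEStronglyMeasurable
        (fun t : ℝ => (1/2 - 1/t + 1/(Real.exp t - 1)) * Real.exp (-x * t) / t)
        (volume.restrict (Ioi 0)) := by
      apply ContinuousOn.aestronglyMeasurable _ measurableSet_Ioi
      apply ContinuousOn.div
      · apply ContinuousOn.mul
        · apply ContinuousOn.add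
          · apply ContinuousOn.sub continuousOn_const
            exact continuousOn_const.div continuousOn_id (fun t ht => ne_of_gt ht)
          · exact continuousOn_const.div
              ((Real.continuous_exp.continuousOn).sub continuousOn_const)
              (fun t ht => ne_of_gt (exp_sub_one_pos ht))
        · exact (Real.continuous_exp.comp (continuous_const.mul continuous_id)).continuousOn
      · exact continuousOn_id
      · exact fun t ht => ne_of_gt ht
    have hptle : ∀ t ∈ Ioi (0:ℝ),
        (1/2 - 1/t + 1/(Real.exp t - 1)) * Real.exp (-x * t) / t
          ≤ (1/12) * Real.exp (-x * t) := by
      intro t ht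
      rw [mem_Ioi] at ht
      have h1 := g_le ht
      have h2 := g_nonneg ht
      have h3 := Real.exp_pos (-x * t)
      rw [div_le_iff₀ ht]
      nlinarith
    have hint1 : IntegrableOn
        (fun t : ℝ => (1/2 - 1/t + 1/(Real.exp t - 1)) * Real.exp (-x * t) / t)
        (Ioi 0) := by
      apply Integrable.mono' hint2 hmeas
      rw [ae_restrict_iff' measurableSet_Ioi]
      filter_upwards with t ht
      rw [Real.norm_eq_abs, abs_of_nonneg]
      · exact hptle t ht
      · rw [mem_Ioi] at ht
        have := g_nonneg ht
        have := Real.exp_pos (-x * t)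
        positivity
    have hle : binetMuReal x ≤ ∫ t in Ioi (0:ℝ), (1/12) * Real.exp (-x * t) :=
      setIntegral_mono_on hint1 hint2 measurableSet_Ioi hptle
    have hval : ∫ t in Ioi (0:ℝ), (1/12 : ℝ) * Real.exp (-x * t) = 1 / (12 * x) := by
      rw [MeasureTheory.integral_const_mul]
      have h : ∀ t : ℝ, Real.exp (-x * t) = (fun u => Real.exp (-u)) (x * t) := by
        intro t; simp
      simp_rw [h]
      rw [integral_comp_mul_left_Ioi (fun u => Real.exp (-u)) 0 hz, mul_zero,
        integral_exp_neg_Ioi_zero, smul_eq_mul, mul_one]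
      field_simp
    calc binetMuReal x ≤ _ := hle
      _ = 1 / (12 * x) := hval
end

section
/- The function k(t) := 1/2 − 1/t + 1/(e^t − 1) is nonnegative for all t > 0. -/
open Real in
private lemma key_deriv (x : ℝ) : 0 ≤ (x - 1) * Real.exp x + 1 := by
  have h := Real.add_one_le_exp (-x)
  have hx : 0 < Real.exp x := Real.exp_pos x
  have h2 : (1 - x) * Real.exp x ≤ 1 := by
    have := mul_le_mul_of_nonneg_right h hx.le
    rw [Real.exp_neg, inv_mul_cancel₀ (ne_of_gt hx)] at this
    linarith
  nlinarith

private lemma key (t : ℝ) (ht : 0 ≤ t) : 0 ≤ (t - 2) * Real.exp t + t + 2 := by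
  set f : ℝ → ℝ := fun x => (x - 2) * Real.exp x + x + 2 with hf
  have hderiv : ∀ x : ℝ, HasDerivAt f ((x - 1) * Real.exp x + 1) x := by
    intro x
    have h1 : HasDerivAt (fun x : ℝ => (x - 2) * Real.exp x)
        (1 * Real.exp x + (x - 2) * Real.exp x) x :=
      ((hasDerivAt_id x).sub_const 2).mul (Real.hasDerivAt_exp x)
    have := (h1.add (hasDerivAt_id x)).add_const 2
    refine this.congr_deriv ?_
    ring
  have hmono : Monotone f := by
    apply monotone_of_deriv_nonneg
    · exact fun x => (hderiv x).differentiableAt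
    · intro x
      rw [(hderiv x).deriv]
      exact key_deriv x
  have h0 : f 0 = 0 := by simp [hf]
  have := hmono ht
  rw [h0] at this
  simpa [hf] using this

theorem stmt_11 (t : ℝ) (ht : 0 < t) :
    0 ≤ 1/2 - 1/t + 1/(Real.exp t - 1) := by
  have h1 : 0 < Real.exp t - 1 := by
    have := Real.add_one_lt_exp (ne_of_gt ht)
    linarith
  have hk := key t ht.le
  have heq : 1/2 - 1/t + 1/(Real.exp t - 1)
      = ((t - 2) * Real.exp t + t + 2) / (2 * t * (Real.exp t - 1)) := by
    field_simp
    ring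
  rw [heq]
  apply div_nonneg hk
  positivity
end

section
/- For all real a, b > 0 and all y ∈ ℝ, ∫_{−∞}^∞ e^{−ixy} g₁(a,b)(x) dx = Γ(b+iay)/Γ(b), where g₁(a,b)(x) = (1/(aΓ(b))) exp(−bx/a − e^{−x/a}). -/
open MeasureTheory

theorem stmt_13 (a b : ℝ) (ha : 0 < a) (hb : 0 < b) (y : ℝ) :
    ∫ x : ℝ, Complex.exp (-(Complex.I * x * y)) *
        (((1 / (a * Real.Gamma b)) * Real.exp (-(b * x / a) - Real.exp (-(x/a))) : ℝ) : ℂ)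
      = Complex.Gamma ((b:ℂ) + Complex.I * a * y) / (Real.Gamma b : ℂ) := by
  set s : ℂ := (b:ℂ) + Complex.I * a * y with hs
  have hsre : 0 < s.re := by simp [hs, hb]
  have hGb : Real.Gamma b ≠ 0 := (Real.Gamma_pos_of_pos hb).ne'
  have hA : (a:ℂ) ≠ 0 := by exact_mod_cast ha.ne'
  set f : ℝ → ℝ := fun x => Real.exp (-(x/a)) with hf
  have hderiv : ∀ x ∈ (Set.univ : Set ℝ),
      HasDerivWithinAt f (-(1/a) * Real.exp (-(x/a))) Set.univ x := by
    intro x _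
    have h1 : HasDerivAt f (Real.exp (-(x/a)) * (-(1/a))) x := by
      have h := (Real.hasDerivAt_exp (-(x/a))).comp x (((hasDerivAt_id x).div_const a).neg)
      exact h
    have h2 : HasDerivAt f (-(1/a) * Real.exp (-(x/a))) x := by
      convert h1 using 1; ring
    exact h2.hasDerivWithinAt
  have hinj : Set.InjOn f Set.univ := by
    intro x _ z _ h
    have h' := Real.exp_injective h
    have h2 : x / a = z / a := by linarith [neg_injective h']
    have h3 := congrArg (· * a) h2
    simpa [div_mul_cancel₀, ha.ne'] using h3
  have himg : f '' Set.univ = Set.Ioi (0:ℝ) := by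
    rw [Set.image_univ]
    ext t
    simp only [Set.mem_range, Set.mem_Ioi]
    constructor
    · rintro ⟨x, rfl⟩; exact Real.exp_pos _
    · intro ht
      refine ⟨-(a * Real.log t), ?_⟩
      have : -(-(a * Real.log t) / a) = Real.log t := by field_simp
      simp only [hf, this]
      exact Real.exp_log ht
  have key := integral_image_eq_integral_abs_deriv_smul (f := f)
      (f' := fun x => -(1/a) * Real.exp (-(x/a))) MeasurableSet.univ hderiv hinj
      (fun t => (Real.exp (-t) : ℂ) * (t:ℂ) ^ (s - 1))
  rw [himg] at key
  have hGamma : Complex.Gamma s = ∫ x in Set.Ioi (0:ℝ),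
      (Real.exp (-x) : ℂ) * (x:ℂ) ^ (s - 1) := by
    rw [Complex.Gamma_eq_integral hsre]; rfl
  rw [key, Measure.restrict_univ] at hGamma
  have hint : ∀ x : ℝ,
      |(-(1/a) * Real.exp (-(x/a)))| • ((Real.exp (-(f x)) : ℂ) * ((f x : ℝ):ℂ) ^ (s - 1))
        = (Real.Gamma b : ℂ) * (Complex.exp (-(Complex.I * x * y)) *
          (((1 / (a * Real.Gamma b)) * Real.exp (-(b * x / a) - Real.exp (-(x/a))) : ℝ) : ℂ)) := by
    intro x
    have hfx : f x = Real.exp (-(x/a)) := rfl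
    have habs : |(-(1/a) * Real.exp (-(x/a)))| = (1/a) * Real.exp (-(x/a)) := by
      rw [abs_mul, abs_neg, abs_of_pos (by positivity), abs_of_pos (Real.exp_pos _)]
    have hpow : ((Real.exp (-(x/a)) : ℝ):ℂ) ^ (s - 1)
        = Complex.exp ((s - 1) * ((-(x/a) : ℝ) : ℂ)) := by
      rw [Complex.cpow_def_of_ne_zero (by exact_mod_cast (Real.exp_pos _).ne'),
        ← Complex.ofReal_log (Real.exp_pos _).le, Real.log_exp, mul_comm]
    rw [hfx, habs, hpow]
    have L : ((1/a) * Real.exp (-(x/a))) • ((Real.exp (-(Real.exp (-(x/a)))) : ℂ)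
          * Complex.exp ((s - 1) * ((-(x/a) : ℝ) : ℂ)))
        = ((1/a : ℝ):ℂ) * (Complex.exp (((-(x/a) : ℝ) : ℂ)) *
            (Complex.exp (((-(Real.exp (-(x/a))) : ℝ) : ℂ)) *
              Complex.exp ((s - 1) * ((-(x/a) : ℝ) : ℂ)))) := by
      rw [Complex.real_smul]
      push_cast [Complex.ofReal_exp]
      ring
    rw [L, ← Complex.exp_add, ← Complex.exp_add]
    have R : (Real.Gamma b : ℂ) * (Complex.exp (-(Complex.I * x * y)) *
          (((1 / (a * Real.Gamma b)) * Real.exp (-(b * x / a) - Real.exp (-(x/a))) : ℝ) : ℂ))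
        = ((1/a : ℝ):ℂ) * (Complex.exp (-(Complex.I * x * y)) *
            Complex.exp (((-(b * x / a) - Real.exp (-(x/a)) : ℝ) : ℂ))) := by
      push_cast [Complex.ofReal_exp]
      have hGbC : (Real.Gamma b : ℂ) ≠ 0 := by exact_mod_cast hGb
      field_simp
    rw [R, ← Complex.exp_add]
    congr 2
    push_cast [hs]
    field_simp
    ring
  simp_rw [hint] at hGamma
  rw [integral_const_mul] at hGamma
  rw [hGamma, mul_comm ((Real.Gamma b : ℝ) : ℂ), mul_div_assoc,
    div_self (show ((Real.Gamma b : ℝ) : ℂ) ≠ 0 by exact_mod_cast hGb), mul_one]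
end

section
/- For all real a, b > 0, the even moments s_{2n} = ∫_{−∞}^∞ x^{2n} g₁(a,b)(x) dx of the density g₁(a,b)(x) = (1/(aΓ(b))) exp(−bx/a − e^{−x/a}) satisfy s_{2n} < (a^{2n}/Γ(b)) ( (2n)!/b^{2n+1} + Γ(2n+b) ) for all n ≥ 1. -/
open MeasureTheory Set


/-- The Gumbel-type integral: `∫ exp(-(c x / a) - e^{-x/a}) dx = a Γ(c)`. -/
lemma gumbel_lemma (a c : ℝ) (ha : 0 < a) (hc : 0 < c) :
    Integrable (fun x : ℝ => Real.exp (-(c * x / a) - Real.exp (-(x/a)))) ∧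
    ∫ x : ℝ, Real.exp (-(c * x / a) - Real.exp (-(x/a))) = a * Real.Gamma c := by
  set φ : ℝ → ℝ := fun x => Real.exp (-(x/a)) with hφ
  set φ' : ℝ → ℝ := fun x => Real.exp (-(x/a)) * (-(1/a)) with hφ'
  have hderiv : ∀ x ∈ (univ : Set ℝ), HasDerivWithinAt φ (φ' x) univ x := by
    intro x _
    have h1 : HasDerivAt (fun x : ℝ => -(x/a)) (-(1/a)) x := by
      simpa using ((hasDerivAt_id x).div_const a).fun_neg
    exact ((Real.hasDerivAt_exp (-(x/a))).comp x h1).hasDerivWithinAt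
  have hinj : InjOn φ univ := by
    intro x _ y _ h
    have h2 : -(x/a) = -(y/a) := Real.exp_injective h
    have h3 : x / a = y / a := by linarith
    field_simp at h3
    exact h3
  have himg : φ '' univ = Ioi 0 := by
    rw [image_univ]
    ext t
    constructor
    · rintro ⟨x, rfl⟩; exact Real.exp_pos _
    · intro ht
      refine ⟨-(a * Real.log t), ?_⟩
      have : -(-(a * Real.log t) / a) = Real.log t := by field_simp
      rw [hφ]; simp only []
      rw [this, Real.exp_log ht]
  set g : ℝ → ℝ := fun t => Real.exp (-t) * t ^ (c - 1) with hg
  have key := integral_image_eq_integral_abs_deriv_smul MeasurableSet.univ hderiv hinj g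
  have hpt : ∀ x : ℝ, |φ' x| • g (φ x)
      = (1/a) * Real.exp (-(c * x / a) - Real.exp (-(x/a))) := by
    intro x
    have h1 : |φ' x| = (1/a) * Real.exp (-(x/a)) := by
      rw [hφ']; simp only []
      rw [abs_mul, abs_of_pos (Real.exp_pos _), abs_neg, abs_of_pos (by positivity : (0:ℝ) < 1/a)]
      ring
    have h2 : Real.exp (-(x/a)) ^ (c - 1) = Real.exp (-(x/a) * (c-1)) := by
      rw [Real.exp_mul]
    rw [smul_eq_mul, h1, hg]
    simp only []
    rw [h2, ← Real.exp_add, mul_assoc, ← Real.exp_add]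
    congr 1
    rw [Real.exp_eq_exp, show (φ x) = Real.exp (-(x/a)) from rfl]
    field_simp
    ring
  have hint : IntegrableOn g (φ '' univ) := by
    rw [himg]; exact Real.GammaIntegral_convergent hc
  have hint2 := (integrableOn_image_iff_integrableOn_abs_deriv_smul MeasurableSet.univ
    hderiv hinj g).mp hint
  rw [integrableOn_univ] at hint2
  have hint3 : Integrable (fun x : ℝ => (1/a) * Real.exp (-(c * x / a) - Real.exp (-(x/a)))) := by
    exact hint2.congr (Filter.Eventually.of_forall hpt)
  have hint4 : Integrable (fun x : ℝ => Real.exp (-(c * x / a) - Real.exp (-(x/a)))) := by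
    have := hint3.const_mul a
    refine this.congr (Filter.Eventually.of_forall fun x => ?_)
    field_simp
  refine ⟨hint4, ?_⟩
  rw [himg, ← Real.Gamma_eq_integral hc] at key
  rw [setIntegral_univ] at key
  simp_rw [hpt] at key
  rw [integral_const_mul] at key
  rw [key]
  field_simp


lemma poly_lemma (a b : ℝ) (ha : 0 < a) (hb : 0 < b) (m : ℕ) :
    IntegrableOn (fun x : ℝ => x ^ m * Real.exp (-(b * x / a))) (Ioi 0) ∧
    ∫ x in Ioi (0:ℝ), x ^ m * Real.exp (-(b * x / a))
      = (Nat.factorial m : ℝ) * a^(m+1) / b^(m+1) := by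
  have hba : 0 < b / a := div_pos hb ha
  have hpt : ∀ x : ℝ, x ^ ((m:ℝ)) * Real.exp (-(b/a) * x ^ (1:ℝ))
      = x ^ m * Real.exp (-(b * x / a)) := by
    intro x
    rw [Real.rpow_natCast, Real.rpow_one]
    congr 1
    ring_nf
  constructor
  · have h := integrableOn_rpow_mul_exp_neg_mul_rpow (p := 1) (s := (m:ℝ)) (b := b/a)
      (lt_of_lt_of_le neg_one_lt_zero (Nat.cast_nonneg m)) one_pos hba
    exact (h.congr (Filter.Eventually.of_forall fun x => hpt x))
  · have h := Real.integral_rpow_mul_exp_neg_mul_Ioi (a := ((m:ℝ)+1)) (r := b/a)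
      (by positivity) hba
    have heq : ∀ x ∈ Ioi (0:ℝ), x ^ (((m:ℝ)+1) - 1) * Real.exp (-(b/a * x))
        = x ^ m * Real.exp (-(b * x / a)) := by
      intro x _
      rw [add_sub_cancel_right, Real.rpow_natCast]
      congr 1
      ring_nf
    rw [setIntegral_congr_fun measurableSet_Ioi heq] at h
    rw [h]
    rw [show (1 / (b/a)) = a/b by field_simp]
    rw [show ((m:ℝ)+1) = ((m+1 : ℕ) : ℝ) by push_cast; ring, Real.rpow_natCast]
    rw [show (((m+1:ℕ)):ℝ) = ((m:ℝ)) + 1 by push_cast; ring, Real.Gamma_nat_eq_factorial]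
    rw [div_pow]
    field_simp

theorem stmt_14 (a b : ℝ) (ha : 0 < a) (hb : 0 < b) (n : ℕ) (hn : 1 ≤ n) :
    ∫ x : ℝ, x ^ (2*n) * ((1 / (a * Real.Gamma b)) * Real.exp (-(b * x / a) - Real.exp (-(x/a))))
      < (a ^ (2*n) / Real.Gamma b) *
          ((Nat.factorial (2*n) : ℝ) / b ^ (2*n+1) + Real.Gamma (2*n + b)) := by
  have hΓ : 0 < Real.Gamma b := Real.Gamma_pos_of_pos hb
  set m := 2 * n with hm
  have hmeven : Even m := even_two_mul n
  set c₀ : ℝ := 1 / (a * Real.Gamma b) with hc₀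
  have hc₀pos : 0 < c₀ := by positivity
  set F : ℝ → ℝ := fun x => x ^ m * (c₀ * Real.exp (-(b * x / a) - Real.exp (-(x/a)))) with hF
  set dom : ℝ → ℝ := fun x => x ^ m * (c₀ * Real.exp (-(b * x / a))) with hdom
  set H : ℝ → ℝ := fun x =>
    (a ^ m * c₀) * Real.exp (-(((m:ℝ)+b) * x / a) - Real.exp (-(x/a))) with hH
  obtain ⟨hGint, hGval⟩ := gumbel_lemma a ((m:ℝ)+b) ha (by positivity)
  obtain ⟨hPint, hPval⟩ := poly_lemma a b ha hb m
  -- basic pointwise facts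
  have hFnonneg : ∀ x : ℝ, 0 ≤ F x := fun x => by
    have := hmeven.pow_nonneg x
    positivity
  have hFledom : ∀ x : ℝ, F x ≤ dom x := by
    intro x
    have h1 : Real.exp (-(b * x / a) - Real.exp (-(x/a))) ≤ Real.exp (-(b * x / a)) := by
      apply Real.exp_le_exp.mpr
      have := Real.exp_pos (-(x/a))
      linarith
    have h2 := hmeven.pow_nonneg x
    exact mul_le_mul_of_nonneg_left (mul_le_mul_of_nonneg_left h1 hc₀pos.le) h2
  have hFleH : ∀ x ∈ Iic (0:ℝ), F x ≤ H x := by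
    intro x hx
    have hx0 : x ≤ 0 := hx
    have hxm : x ^ m ≤ a ^ m * Real.exp ((m:ℝ) * -(x/a)) := by
      have h1 : -(x/a) ≤ Real.exp (-(x/a)) := by
        have := Real.add_one_le_exp (-(x/a))
        linarith
      have h2 : -x ≤ a * Real.exp (-(x/a)) := by
        have := mul_le_mul_of_nonneg_left h1 ha.le
        calc -x = a * -(x/a) := by field_simp
        _ ≤ a * Real.exp (-(x/a)) := this
      have h3 : x ^ m = (-x) ^ m := (hmeven.neg_pow x).symm
      have h4 : (-x) ^ m ≤ (a * Real.exp (-(x/a))) ^ m :=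
        pow_le_pow_left₀ (by linarith) h2 m
      rw [h3]
      calc (-x) ^ m ≤ (a * Real.exp (-(x/a))) ^ m := h4
        _ = a ^ m * Real.exp (-(x/a)) ^ m := mul_pow _ _ _
        _ = a ^ m * Real.exp ((m:ℝ) * -(x/a)) := by rw [Real.exp_nat_mul]
    calc F x ≤ (a ^ m * Real.exp ((m:ℝ) * -(x/a)))
          * (c₀ * Real.exp (-(b * x / a) - Real.exp (-(x/a)))) := by
          apply mul_le_mul_of_nonneg_right hxm
          positivity
      _ = H x := by
          rw [hH]
          simp only []
          rw [mul_mul_mul_comm, ← Real.exp_add]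
          congr 2
          field_simp
          ring
  -- integrability
  have hFcont : Continuous F := by
    apply Continuous.mul (continuous_pow m)
    apply Continuous.mul continuous_const
    apply Real.continuous_exp.comp
    fun_prop
  have hdomint : IntegrableOn dom (Ioi 0) := by
    have := hPint.const_mul c₀
    refine this.congr (Filter.Eventually.of_forall fun x => ?_)
    simp only [hdom]
    ring
  have hHint : Integrable H := hGint.const_mul _
  have hFint_pos : IntegrableOn F (Ioi 0) := by
    refine Integrable.mono hdomint (hFcont.aestronglyMeasurable.restrict) ?_
    refine Filter.Eventually.of_forall fun x => ?_
    rw [Real.norm_eq_abs, Real.norm_eq_abs, abs_of_nonneg (hFnonneg x)]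
    refine le_trans (hFledom x) (le_abs_self _)
  have hFint_neg : IntegrableOn F (Iic 0) := by
    refine Integrable.mono hHint.integrableOn (hFcont.aestronglyMeasurable.restrict)
      (ae_restrict_of_forall_mem measurableSet_Iic fun x hx => ?_)
    rw [Real.norm_eq_abs, Real.norm_eq_abs, abs_of_nonneg (hFnonneg x)]
    exact le_trans (hFleH x hx) (le_abs_self _)
  -- splitting
  have hsplit : ∫ x : ℝ, F x = (∫ x in Iic (0:ℝ), F x) + ∫ x in Ioi (0:ℝ), F x := by
    rw [← setIntegral_univ, ← Set.Iic_union_Ioi (a := (0:ℝ)),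
      setIntegral_union (Iic_disjoint_Ioi le_rfl) measurableSet_Ioi hFint_neg hFint_pos]
  -- strict bound on the positive part
  have hpos_lt : (∫ x in Ioi (0:ℝ), F x) < ∫ x in Ioi (0:ℝ), dom x := by
    have hsub : IntegrableOn (fun x => dom x - F x) (Ioi 0) := hdomint.sub hFint_pos
    have hnonneg : 0 ≤ᵐ[volume.restrict (Ioi (0:ℝ))] fun x => dom x - F x :=
      Filter.Eventually.of_forall fun x => sub_nonneg.mpr (hFledom x)
    have hposint : 0 < ∫ x in Ioi (0:ℝ), (dom x - F x) := by
      rw [setIntegral_pos_iff_support_of_nonneg_ae hnonneg hsub]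
      have hsup : Ioi (0:ℝ) ⊆ Function.support (fun x => dom x - F x) ∩ Ioi 0 := by
        intro x hx
        refine ⟨?_, hx⟩
        have hx0 : (0:ℝ) < x := hx
        have h1 : Real.exp (-(b * x / a) - Real.exp (-(x/a))) < Real.exp (-(b * x / a)) := by
          apply Real.exp_lt_exp.mpr
          have := Real.exp_pos (-(x/a))
          linarith
        have h2 : 0 < x ^ m := pow_pos hx0 m
        have : F x < dom x := by
          apply mul_lt_mul_of_pos_left _ h2
          exact mul_lt_mul_of_pos_left h1 hc₀pos
        simp only [Function.mem_support]
        intro hcon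
        rw [sub_eq_zero] at hcon
        exact absurd hcon (ne_of_gt this)
      calc (0:ENNReal) < volume (Ioi (0:ℝ)) := by rw [Real.volume_Ioi]; exact ENNReal.zero_lt_top
        _ ≤ _ := measure_mono hsup
    have := integral_sub hdomint hFint_pos
    rw [this] at hposint
    linarith
  -- bound on the negative part
  have hneg_le : (∫ x in Iic (0:ℝ), F x) ≤ (a ^ m * c₀) * (a * Real.Gamma ((m:ℝ)+b)) := by
    calc (∫ x in Iic (0:ℝ), F x) ≤ ∫ x in Iic (0:ℝ), H x :=
          setIntegral_mono_on hFint_neg hHint.integrableOn measurableSet_Iic hFleH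
      _ ≤ ∫ x : ℝ, H x := by
          apply setIntegral_le_integral hHint
          refine Filter.Eventually.of_forall fun x => ?_
          simp only [hH]
          positivity
      _ = (a ^ m * c₀) * (a * Real.Gamma ((m:ℝ)+b)) := by
          simp only [hH]
          rw [integral_const_mul, hGval]
  -- value of the dominating integral on the positive part
  have hdomval : (∫ x in Ioi (0:ℝ), dom x)
      = c₀ * ((Nat.factorial m : ℝ) * a^(m+1) / b^(m+1)) := by
    have : ∀ x : ℝ, dom x = c₀ * (x ^ m * Real.exp (-(b * x / a))) := fun x => by
      simp only [hdom]; ring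
    simp_rw [this]
    rw [integral_const_mul, hPval]
  -- put everything together
  have hlt : (∫ x : ℝ, F x)
      < (a ^ m * c₀) * (a * Real.Gamma ((m:ℝ)+b))
        + c₀ * ((Nat.factorial m : ℝ) * a^(m+1) / b^(m+1)) := by
    rw [hsplit]
    have := hpos_lt
    rw [hdomval] at this
    linarith
  have hrhs : (a ^ m * c₀) * (a * Real.Gamma ((m:ℝ)+b))
        + c₀ * ((Nat.factorial m : ℝ) * a^(m+1) / b^(m+1))
      = (a ^ m / Real.Gamma b) *
          ((Nat.factorial m : ℝ) / b ^ (m+1) + Real.Gamma ((m:ℝ) + b)) := by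
    rw [hc₀]
    field_simp
    ring
  rw [hrhs] at hlt
  have hcast : ((m:ℝ)) = 2 * (n:ℝ) := by push_cast [hm]; ring
  rw [hcast] at hlt
  exact hlt
end

section
/- For all real a, b > 0, the density g₁(a,b)(x) = (1/(aΓ(b))) exp(−bx/a − e^{−x/a}) on ℝ satisfies Carleman's condition ∑_{n≥1} s_{2n}^{−1/(2n)} = ∞, where s_{2n} are its even moments; hence it is determinate in the Hamburger moment problem. -/
open MeasureTheory Real Set

-- integrability of exp(-(d*|x|))
lemma aux_int_exp_abs {d : ℝ} (hd : 0 < d) :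
    Integrable (fun x : ℝ => Real.exp (-(d * |x|))) := by
  have h1 : IntegrableOn (fun x : ℝ => Real.exp (-(d * |x|))) (Ioi 0) := by
    refine (exp_neg_integrableOn_Ioi 0 hd).congr_fun (fun x hx => ?_) measurableSet_Ioi
    rw [abs_of_pos hx, ← neg_mul]
  have h2 : IntegrableOn (fun x : ℝ => Real.exp (-(d * |x|))) (Iic 0) := by
    rw [← Measure.map_neg_eq_self (volume : Measure ℝ)]
    have m : MeasurableEmbedding fun x : ℝ => -x := (Homeomorph.neg ℝ).measurableEmbedding
    rw [m.integrableOn_map_iff]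
    simp only [Function.comp_def, abs_neg, neg_preimage, neg_Iic, neg_zero]
    exact Iff.mpr integrableOn_Ici_iff_integrableOn_Ioi h1
  have := h2.union h1
  rw [Iic_union_Ioi] at this; rwa [← integrableOn_univ]

-- poly * exp decay bound
lemma aux_poly_exp {m : ℕ} {lam t : ℝ} (hlam : 0 < lam) (ht : 0 ≤ t) :
    t ^ m * Real.exp (-(lam * t)) ≤ (m.factorial : ℝ) / lam ^ m := by
  have h := Real.pow_div_factorial_le_exp (x := lam * t) (by positivity) m
  rw [mul_pow] at h
  have hfac : (0:ℝ) < m.factorial := by exact_mod_cast m.factorial_pos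
  have hexp := Real.exp_pos (lam * t)
  rw [div_le_iff₀ hfac] at h
  rw [Real.exp_neg, ← div_eq_mul_inv, div_le_div_iff₀ hexp (pow_pos hlam m)]
  nlinarith [pow_nonneg ht m, pow_pos hlam m]

lemma aux_density {a b : ℝ} (ha : 0 < a) (hb : 0 < b) (x : ℝ) :
    Real.exp (-(b * x / a) - Real.exp (-(x/a))) ≤
      Real.exp ((b+1)^2/2) * Real.exp (-(min 1 b / a * |x|)) := by
  rw [← Real.exp_add]
  apply Real.exp_le_exp.mpr
  have hbx : b * x / a = b * (x / a) := by ring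
  rw [hbx]
  rcases le_or_gt 0 x with hx | hx
  · rw [abs_of_nonneg hx]
    have hcb : min 1 b / a ≤ b / a := div_le_div_of_nonneg_right ?_ ha.le
    · have h3 : min 1 b / a * x ≤ b / a * x := mul_le_mul_of_nonneg_right hcb hx
      have h4 : b / a * x = b * (x / a) := by ring
      rw [h4] at h3
      nlinarith [(Real.exp_pos (-(x/a))).le, sq_nonneg (b+1)]
    · exact min_le_right 1 b
  · rw [abs_of_neg hx]
    have hu : 0 ≤ -(x / a) := le_of_lt (neg_pos.mpr (div_neg_of_neg_of_pos hx ha))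
    have h2 := Real.quadratic_le_exp_of_nonneg hu
    have hc1 : min 1 b / a ≤ 1 / a := div_le_div_of_nonneg_right (min_le_left 1 b) ha.le
    have h3 : min 1 b / a * (-x) ≤ 1 / a * (-x) := mul_le_mul_of_nonneg_right hc1 (by linarith)
    have h4 : 1 / a * (-x) = -(x / a) := by ring
    rw [h4] at h3
    nlinarith [sq_nonneg (x/a + (b+1)), (Real.exp_pos (-(x/a))).le]

theorem stmt_15 (a b : ℝ) (ha : 0 < a) (hb : 0 < b) :
    ¬ Summable (fun n : ℕ =>
      (∫ x : ℝ, x ^ (2*(n+1)) *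
          ((1 / (a * Real.Gamma b)) * Real.exp (-(b * x / a) - Real.exp (-(x/a))))) ^
        (-(1 / (2 * ((n:ℝ) + 1))))) := by
  intro hsum
  have hΓ : 0 < Real.Gamma b := Real.Gamma_pos_of_pos hb
  set K : ℝ := 1 / (a * Real.Gamma b) with hK_def
  have hK : 0 < K := by positivity
  set c : ℝ := min 1 b / a with hc_def
  have hc : 0 < c := div_pos (lt_min one_pos hb) ha
  set A : ℝ := K * Real.exp ((b+1)^2/2) with hA_def
  have hA : 0 < A := mul_pos hK (Real.exp_pos _)
  have hEint : Integrable (fun x : ℝ => Real.exp (-(c/2 * |x|))) :=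
    aux_int_exp_abs (by positivity)
  set E : ℝ := ∫ x : ℝ, Real.exp (-(c/2 * |x|)) with hE_def
  have hE0 : 0 ≤ E := integral_nonneg fun x => (Real.exp_pos _).le
  set A₁ : ℝ := max (A * E) 1 with hA₁_def
  have hA₁ : 1 ≤ A₁ := le_max_right _ _
  set D : ℝ := A₁ * (2 / c) with hD_def
  have hD : 0 < D := mul_pos (lt_of_lt_of_le one_pos hA₁) (by positivity)
  -- pointwise density bound
  have hgle : ∀ x : ℝ, K * Real.exp (-(b * x / a) - Real.exp (-(x/a)))
      ≤ A * Real.exp (-(c * |x|)) := by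
    intro x
    have h := aux_density ha hb x
    calc K * Real.exp (-(b * x / a) - Real.exp (-(x/a)))
        ≤ K * (Real.exp ((b+1)^2/2) * Real.exp (-(c * |x|))) :=
          mul_le_mul_of_nonneg_left h hK.le
      _ = A * Real.exp (-(c * |x|)) := by ring
  -- key lower bound on each term
  have key : ∀ n : ℕ, 1 / (2 * D) * (1 / ((n:ℝ) + 1)) ≤
      (∫ x : ℝ, x ^ (2*(n+1)) *
          (K * Real.exp (-(b * x / a) - Real.exp (-(x/a))))) ^
        (-(1 / (2 * ((n:ℝ) + 1)))) := by
    intro n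
    set m : ℕ := 2 * (n + 1) with hm_def
    have hm : 0 < m := by omega
    have hmR : ((m:ℝ)) = 2 * ((n:ℝ) + 1) := by push_cast [hm_def]; ring
    have hmR0 : (0:ℝ) < (m:ℝ) := by exact_mod_cast hm
    set f : ℝ → ℝ := fun x => x ^ m * (K * Real.exp (-(b * x / a) - Real.exp (-(x/a))))
      with hf_def
    have hxm : ∀ x : ℝ, (0:ℝ) ≤ x ^ m := fun x => (Even.pow_nonneg ⟨n+1, by omega⟩ x)
    have hf_nonneg : ∀ x, 0 ≤ f x := fun x =>
      mul_nonneg (hxm x) (mul_nonneg hK.le (Real.exp_pos _).le)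
    set Mn : ℝ := A * ((m.factorial : ℝ) / (c/2) ^ m) with hMn_def
    have hMn : 0 < Mn := by positivity
    have hbd : ∀ x : ℝ, f x ≤ Mn * Real.exp (-(c/2 * |x|)) := by
      intro x
      have h1 : f x ≤ x ^ m * (A * Real.exp (-(c * |x|))) :=
        mul_le_mul_of_nonneg_left (hgle x) (hxm x)
      have h2 : x ^ m = |x| ^ m := by
        rw [← abs_pow, abs_of_nonneg (hxm x)]
      have h3 : Real.exp (-(c * |x|)) =
          Real.exp (-(c/2 * |x|)) * Real.exp (-(c/2 * |x|)) := by
        rw [← Real.exp_add]; ring_nf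
      have h4 : |x| ^ m * Real.exp (-(c/2 * |x|)) ≤ (m.factorial : ℝ) / (c/2) ^ m :=
        aux_poly_exp (by positivity) (abs_nonneg x)
      calc f x ≤ x ^ m * (A * Real.exp (-(c * |x|))) := h1
        _ = A * (|x| ^ m * Real.exp (-(c/2 * |x|))) * Real.exp (-(c/2 * |x|)) := by
            rw [h2, h3]; ring
        _ ≤ A * ((m.factorial : ℝ) / (c/2) ^ m) * Real.exp (-(c/2 * |x|)) := by
            apply mul_le_mul_of_nonneg_right _ (Real.exp_pos _).le
            exact mul_le_mul_of_nonneg_left h4 hA.le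
        _ = Mn * Real.exp (-(c/2 * |x|)) := by rw [hMn_def]
    have hf_cont : Continuous f := by fun_prop
    have hf_int : Integrable f := by
      refine (hEint.const_mul Mn).mono' hf_cont.aestronglyMeasurable
        (Filter.Eventually.of_forall fun x => ?_)
      rw [Real.norm_of_nonneg (hf_nonneg x)]
      exact hbd x
    have hs_pos : 0 < ∫ x, f x := by
      rw [integral_pos_iff_support_of_nonneg hf_nonneg hf_int]
      have hsub : Set.Ioi (0:ℝ) ⊆ Function.support f := fun x hx =>
        ne_of_gt (mul_pos (pow_pos hx m) (mul_pos hK (Real.exp_pos _)))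
      refine lt_of_lt_of_le ?_ (measure_mono hsub)
      rw [Real.volume_Ioi]
      exact ENNReal.zero_lt_top
    have hs_le : ∫ x, f x ≤ Mn * E := by
      have h := integral_mono hf_int (hEint.const_mul Mn) hbd
      rwa [MeasureTheory.integral_const_mul] at h
    have hfrac : (m.factorial : ℝ) / (c/2) ^ m = (m.factorial : ℝ) * (2/c) ^ m := by
      rw [div_eq_mul_inv, ← inv_pow, inv_div]
    have hs_le2 : ∫ x, f x ≤ (D * (m:ℝ)) ^ m := by
      have e1 : Mn * E = (A * E) * ((m.factorial : ℝ) * (2/c) ^ m) := by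
        rw [hMn_def, hfrac]; ring
      have hfm : (m.factorial : ℝ) ≤ (m:ℝ) ^ m := by
        exact_mod_cast Nat.factorial_le_pow m
      have e2 : (A * E) * ((m.factorial : ℝ) * (2/c) ^ m) ≤
          A₁ * ((m:ℝ) ^ m * (2/c) ^ m) := by
        apply mul_le_mul (le_max_left _ _) _ (by positivity)
          (le_trans zero_le_one hA₁)
        exact mul_le_mul_of_nonneg_right hfm (by positivity)
      have e3 : A₁ * ((m:ℝ) ^ m * (2/c) ^ m) ≤ A₁ ^ m * ((m:ℝ) ^ m * (2/c) ^ m) :=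
        mul_le_mul_of_nonneg_right (le_self_pow₀ hA₁ hm.ne') (by positivity)
      have e4 : A₁ ^ m * ((m:ℝ) ^ m * (2/c) ^ m) = (D * (m:ℝ)) ^ m := by
        rw [hD_def, mul_pow, mul_pow]; ring
      calc ∫ x, f x ≤ Mn * E := hs_le
        _ = (A * E) * ((m.factorial : ℝ) * (2/c) ^ m) := e1
        _ ≤ A₁ * ((m:ℝ) ^ m * (2/c) ^ m) := e2
        _ ≤ A₁ ^ m * ((m:ℝ) ^ m * (2/c) ^ m) := e3
        _ = (D * (m:ℝ)) ^ m := e4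
    have hDm : 0 < D * (m:ℝ) := mul_pos hD hmR0
    have h5 : ((D * (m:ℝ)) ^ m) ^ (-(1 / (m:ℝ))) ≤ (∫ x, f x) ^ (-(1 / (m:ℝ))) :=
      Real.rpow_le_rpow_of_nonpos hs_pos hs_le2
        (neg_nonpos.mpr (by positivity))
    have h6 : ((D * (m:ℝ)) ^ m) ^ (-(1 / (m:ℝ))) = (D * (m:ℝ))⁻¹ := by
      rw [← Real.rpow_natCast (D * (m:ℝ)) m, ← Real.rpow_mul hDm.le,
        mul_neg, mul_one_div, div_self hmR0.ne', Real.rpow_neg_one]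
    have h7 : 1 / (2 * D) * (1 / ((n:ℝ) + 1)) = (D * (m:ℝ))⁻¹ := by
      rw [hmR]
      field_simp
    rw [← hmR, h7]
    exact le_trans (le_of_eq h6.symm) h5
  -- derive contradiction
  have hsmall : Summable (fun n : ℕ => 1 / (2 * D) * (1 / ((n:ℝ) + 1))) :=
    hsum.of_nonneg_of_le (fun n => by positivity) key
  have hsum3 : Summable (fun n : ℕ => 1 / ((n:ℝ) + 1)) :=
    (summable_mul_left_iff (by positivity : (1:ℝ) / (2 * D) ≠ 0)).mp hsmall
  have hsum4 : Summable (fun n : ℕ => 1 / ((n:ℕ) : ℝ)) := by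
    rw [← summable_nat_add_iff 1]
    exact hsum3.congr fun n => by push_cast; ring
  exact Real.not_summable_one_div_natCast hsum4
end

section
/- For all real a, b > 0, the first moment of the density g₁(a,b)(x) = (1/(aΓ(b))) exp(−bx/a − e^{−x/a}) equals −a·Ψ(b), where Ψ = Γ'/Γ is the digamma function; i.e., ∫_{−∞}^∞ x g₁(a,b)(x) dx = −aΨ(b). -/
open MeasureTheory Set

/-- The digamma function Ψ = Γ'/Γ. -/
noncomputable def digamma (x : ℝ) : ℝ := deriv Real.Gamma x / Real.Gamma x

lemma gamma_deriv_integral {b : ℝ} (hb : 0 < b) :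
    HasDerivAt Real.Gamma
      (∫ t in Ioi (0:ℝ), t ^ (b - 1) * (Real.log t * Real.exp (-t))) b := by
  have hre : (0:ℝ) < (b:ℂ).re := by simpa using hb
  have h1 := Complex.hasDerivAt_GammaIntegral hre
  have heq : Complex.Gamma =ᶠ[nhds (b:ℂ)] Complex.GammaIntegral := by
    have hopen : IsOpen {s : ℂ | 0 < s.re} := by
      exact isOpen_lt continuous_const Complex.continuous_re
    filter_upwards [hopen.mem_nhds hre] with s hs
    exact Complex.Gamma_eq_integral hs
  have h2 : HasDerivAt Complex.Gamma
      (∫ t : ℝ in Ioi 0, (t:ℂ) ^ ((b:ℂ) - 1) * (Real.log t * Real.exp (-t))) b :=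
    h1.congr_of_eventuallyEq heq
  have hIval : (∫ t : ℝ in Ioi 0, (t:ℂ) ^ ((b:ℂ) - 1) * (Real.log t * Real.exp (-t)))
      = ((∫ t in Ioi (0:ℝ), t ^ (b - 1) * (Real.log t * Real.exp (-t)) : ℝ) : ℂ) := by
    have step : (∫ t : ℝ in Ioi 0, (t:ℂ) ^ ((b:ℂ) - 1) * (Real.log t * Real.exp (-t)))
        = ∫ t : ℝ in Ioi 0, ((t ^ (b - 1) * (Real.log t * Real.exp (-t)) : ℝ) : ℂ) := by
      refine setIntegral_congr_fun measurableSet_Ioi fun t ht => ?_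
      have : ((t:ℂ)) ^ ((b:ℂ) - 1) = ((t ^ (b - 1) : ℝ) : ℂ) := by
        rw [Complex.ofReal_cpow (le_of_lt ht)]
        norm_num
      rw [this]
      push_cast
      ring
    rw [step]
    exact integral_ofReal
  rw [hIval] at h2
  have h3 := h2.real_of_complex
  have : (fun x : ℝ => (Complex.Gamma (x:ℂ)).re) = Real.Gamma := by
    funext x
    rw [Complex.Gamma_ofReal]
    simp
  rwa [this, Complex.ofReal_re] at h3

theorem stmt_18 (a b : ℝ) (ha : 0 < a) (hb : 0 < b) :
    ∫ x : ℝ, x * ((1 / (a * Real.Gamma b)) * Real.exp (-(b * x / a) - Real.exp (-(x/a))))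
      = -a * digamma b := by
  have hΓ : 0 < Real.Gamma b := Real.Gamma_pos_of_pos hb
  set c : ℝ := 1 / (a * Real.Gamma b) with hc
  set F : ℝ → ℝ := fun x => x * (c * Real.exp (-(b * x / a) - Real.exp (-(x/a)))) with hF
  -- substitution x = -a log t
  have hderiv : ∀ t ∈ Ioi (0:ℝ),
      HasDerivWithinAt (fun t : ℝ => -a * Real.log t) (-a / t) (Ioi 0) t := by
    intro t ht
    have := (Real.hasDerivAt_log (ne_of_gt ht)).const_mul (-a)
    simpa [div_eq_mul_inv] using this.hasDerivWithinAt
  have hinj : InjOn (fun t : ℝ => -a * Real.log t) (Ioi 0) := by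
    intro s hs t ht h
    have : Real.log s = Real.log t := by
      have h' : -a * Real.log s = -a * Real.log t := h
      exact mul_left_cancel₀ (neg_ne_zero.mpr (ne_of_gt ha)) h'
    exact Real.log_injOn_pos hs ht this
  have himg : (fun t : ℝ => -a * Real.log t) '' (Ioi 0) = univ := by
    apply eq_univ_of_forall
    intro x
    refine ⟨Real.exp (-x / a), Real.exp_pos _, ?_⟩
    show -a * Real.log (Real.exp (-x / a)) = x
    rw [Real.log_exp]
    field_simp
  have hsub := integral_image_eq_integral_abs_deriv_smul measurableSet_Ioi hderiv hinj F
  rw [himg] at hsub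
  have hLHS : (∫ x : ℝ, F x) = ∫ t in Ioi (0:ℝ), |(-a / t)| • F (-a * Real.log t) := by
    rw [← hsub]; exact setIntegral_univ.symm
  have hpt : ∀ t ∈ Ioi (0:ℝ),
      |(-a / t)| • F (-a * Real.log t)
        = (-a^2 * c) * (t ^ (b - 1) * (Real.log t * Real.exp (-t))) := by
    intro t ht
    have ht' : (0:ℝ) < t := ht
    have habs : |(-a / t)| = a / t := by
      rw [abs_div, abs_neg, abs_of_pos ha, abs_of_pos ht']
    have h1 : -(b * (-a * Real.log t) / a) = b * Real.log t := by field_simp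
    have h2 : -(-a * Real.log t / a) = Real.log t := by field_simp
    have h3 : Real.exp (b * Real.log t - Real.exp (Real.log t))
        = t ^ b * Real.exp (-t) := by
      rw [Real.exp_log ht', Real.exp_sub, Real.rpow_def_of_pos ht', mul_comm b, Real.exp_neg, div_eq_mul_inv]
    have h4 : t ^ b / t = t ^ (b - 1) := by
      rw [Real.rpow_sub ht', Real.rpow_one]
    rw [smul_eq_mul, habs, hF]
    simp only
    rw [h1, h2]
    have : (b * Real.log t) - Real.exp (Real.log t) = b * Real.log t - Real.exp (Real.log t) := rfl
    rw [show Real.exp (b * Real.log t - Real.exp (Real.log t)) = t ^ b * Real.exp (-t) from h3]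
    rw [← h4]
    have htne : t ≠ 0 := ne_of_gt ht'
    field_simp
  have hInt : (∫ x : ℝ, F x)
      = (-a^2 * c) * ∫ t in Ioi (0:ℝ), t ^ (b - 1) * (Real.log t * Real.exp (-t)) := by
    rw [hLHS, setIntegral_congr_fun measurableSet_Ioi hpt, integral_const_mul]
  have hG := (gamma_deriv_integral hb).deriv
  rw [hF] at hInt
  rw [hInt]
  unfold digamma
  rw [hG, hc]
  field_simp
end
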